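/- Let C ≥ 1 and D be natural numbers, let q_s, q_r : {0,…,D} → ℝ be probability vectors, and let a, b : Fin C → ℝ be probability vectors. Define on Ω = {n : Fin C → ℕ | Σ_k n_k ≤ D} the probability mass functions P_s(n) = q_s(|n|) · (|n|! / Π_k n_k!) · Π_k a_k^{n_k} and P_r(n) = q_r(|n|) · (|n|! / Π_k n_k!) · Π_k b_k^{n_k}, where |n| = Σ_k n_k. Then the Bhattacharyya coefficient satisfies BC(P_s, P_r) = Σ_{d=0}^{D} √(q_s(d) q_r(d)) · ( Σ_{k=1}^{C} √(a_k b_k) )^d. -/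

import Mathlib

open scoped BigOperators

lemma sqrt_pow_aux (x : ℝ) (hx : 0 ≤ x) (m : ℕ) :
    Real.sqrt (x ^ m) = Real.sqrt x ^ m := by
  induction m with
  | zero => simp
  | succ m ih => rw [pow_succ, pow_succ, Real.sqrt_mul (pow_nonneg hx m), ih]

lemma sqrt_prod_aux {ι : Type*} (s : Finset ι) (f : ι → ℝ) (hf : ∀ i ∈ s, 0 ≤ f i) :
    Real.sqrt (∏ i ∈ s, f i) = ∏ i ∈ s, Real.sqrt (f i) := by
  classical
  induction s using Finset.induction with
  | empty => simp
  | insert x s hx ih =>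
    rw [Finset.prod_insert hx, Finset.prod_insert hx,
      Real.sqrt_mul (hf x (Finset.mem_insert_self x s)),
      ih fun i hi => hf i (Finset.mem_insert_of_mem hi)]

/-- The Bhattacharyya coefficient between two degree-weighted multinomial distributions over
neighborhood label configurations (Equation (bat) of Appendix B). -/
theorem degree_weighted_multinomial_bhattacharyya
    (C D : ℕ) (hC : 1 ≤ C)
    (qs qr : ℕ → ℝ)
    (hqs_nonneg : ∀ d, 0 ≤ qs d) (hqs_sum : ∑ d ∈ Finset.range (D + 1), qs d = 1)
    (hqr_nonneg : ∀ d, 0 ≤ qr d) (hqr_sum : ∑ d ∈ Finset.range (D + 1), qr d = 1)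
    (a b : Fin C → ℝ)
    (ha_nonneg : ∀ k, 0 ≤ a k) (ha_sum : ∑ k, a k = 1)
    (hb_nonneg : ∀ k, 0 ≤ b k) (hb_sum : ∑ k, b k = 1)
    -- the space of neighborhood label configurations of size at most `D`
    (Ω : Finset (Fin C → ℕ))
    (hΩ : Ω = (Fintype.piFinset fun _ : Fin C => Finset.range (D + 1)).filter
        (fun n => ∑ k, n k ≤ D))
    -- the two degree-weighted multinomial probability mass functions on `Ω`
    (Ps Pr : (Fin C → ℕ) → ℝ)
    (hPs : ∀ n, Ps n =
      qs (∑ k, n k) * (Nat.multinomial Finset.univ n : ℝ) * ∏ k, a k ^ n k)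
    (hPr : ∀ n, Pr n =
      qr (∑ k, n k) * (Nat.multinomial Finset.univ n : ℝ) * ∏ k, b k ^ n k) :
    ∑ n ∈ Ω, Real.sqrt (Ps n * Pr n)
      = ∑ d ∈ Finset.range (D + 1), Real.sqrt (qs d * qr d) *
          (∑ k, Real.sqrt (a k * b k)) ^ d := by
  classical
  -- pointwise simplification of the square root
  have key : ∀ n : Fin C → ℕ, Real.sqrt (Ps n * Pr n)
      = Real.sqrt (qs (∑ k, n k) * qr (∑ k, n k)) *
        ((Nat.multinomial Finset.univ n : ℝ) * ∏ k, Real.sqrt (a k * b k) ^ n k) := by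
    intro n
    rw [hPs, hPr]
    have h1 : qs (∑ k, n k) * (Nat.multinomial Finset.univ n : ℝ) * (∏ k, a k ^ n k) *
        (qr (∑ k, n k) * (Nat.multinomial Finset.univ n : ℝ) * ∏ k, b k ^ n k)
        = (qs (∑ k, n k) * qr (∑ k, n k)) *
          (((Nat.multinomial Finset.univ n : ℝ) * (Nat.multinomial Finset.univ n : ℝ)) *
            ∏ k, (a k * b k) ^ n k) := by
      simp only [mul_pow, Finset.prod_mul_distrib]
      ring
    rw [h1, Real.sqrt_mul (mul_nonneg (hqs_nonneg _) (hqr_nonneg _)),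
      Real.sqrt_mul (by positivity :
        (0:ℝ) ≤ (Nat.multinomial Finset.univ n : ℝ) * (Nat.multinomial Finset.univ n : ℝ)),
      Real.sqrt_mul_self (by positivity : (0:ℝ) ≤ (Nat.multinomial Finset.univ n : ℝ)),
      sqrt_prod_aux _ _ (fun k _ => pow_nonneg (mul_nonneg (ha_nonneg k) (hb_nonneg k)) _)]
    congr 1
    congr 1
    refine Finset.prod_congr rfl fun k _ => ?_
    exact sqrt_pow_aux _ (mul_nonneg (ha_nonneg k) (hb_nonneg k)) _
  simp_rw [key]
  -- partition the sum by degree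
  have hmaps : ∀ n ∈ Ω, (∑ k, n k) ∈ Finset.range (D + 1) := by
    intro n hn
    rw [hΩ, Finset.mem_filter] at hn
    exact Finset.mem_range.2 (Nat.lt_succ_of_le hn.2)
  rw [← Finset.sum_fiberwise_of_maps_to hmaps]
  refine Finset.sum_congr rfl fun d hd => ?_
  have hd' : d ≤ D := Nat.lt_succ_iff.1 (Finset.mem_range.1 hd)
  have hfib : Ω.filter (fun n => (∑ k, n k) = d)
      = Finset.piAntidiag (Finset.univ : Finset (Fin C)) d := by
    ext n
    simp only [hΩ, Finset.mem_filter, Fintype.mem_piFinset, Finset.mem_range,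
      Finset.mem_piAntidiag, Finset.mem_univ, implies_true, and_true, ne_eq]
    constructor
    · rintro ⟨-, h⟩; exact h
    · intro h
      refine ⟨⟨fun k => ?_, h ▸ hd'⟩, h⟩
      have hk : n k ≤ d := by
        rw [← h]
        exact Finset.single_le_sum (fun j _ => Nat.zero_le _) (Finset.mem_univ k)
      omega
  rw [hfib]
  have hmult := Finset.sum_pow_eq_sum_piAntidiag (Finset.univ : Finset (Fin C))
    (fun k => Real.sqrt (a k * b k)) d
  rw [hmult, Finset.mul_sum]
  refine Finset.sum_congr rfl fun n hn => ?_
  have hsum : (∑ k, n k) = d := (Finset.mem_piAntidiag.1 hn).1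
  rw [hsum]
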